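/- arXiv:2104.08858 — 6 statements merged into one kernel-verified Lean document; each statement's English description precedes it below -/
import Mathlib

section
/- Let n ≥ 5 and for each pair 3 ≤ i < j ≤ n let (c_{ij}, c'_{ij}) ∈ ℂ² satisfy c_{ij} ≠ 0, c'_{ij} ≠ 0 and c_{ij} ≠ c'_{ij}. Then the following are equivalent: (a) the cubic relations c'_{ij}·c_{ik}·c'_{jk} = c_{ij}·c'_{ik}·c_{jk} hold for all triples 3 ≤ i < j < k ≤ n; (b) for all 4 ≤ i < j ≤ n one has c_{ij}·c_{3i}·c'_{3j} = c'_{ij}·c'_{3i}·c_{3j} (i.e. (c_{ij}:c'_{ij}) = (c'_{3i}·c_{3j} : c_{3i}·c'_{3j}) in ℂP^1) and c_{3i}·c'_{3j} ≠ c'_{3i}·c_{3j} (i.e. the points (c_{3i}:c'_{3i}), 4 ≤ i ≤ n, are pairwise distinct in ℂP^1). -/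
/-- Let `n ≥ 5` and suppose every pair `(c i j, c' i j)`, `3 ≤ i < j ≤ n`,
satisfies `c i j ≠ 0`, `c' i j ≠ 0`, `c i j ≠ c' i j` (the point `(c i j : c' i j)` of
`ℂP¹` avoids `A = {(0:1),(1:0),(1:1)}`).  Then the cubic relations
`c'_{ij}·c_{ik}·c'_{jk} = c_{ij}·c'_{ik}·c_{jk}` for all `3 ≤ i < j < k ≤ n` hold
iff for all `4 ≤ i < j ≤ n` one has
`c_{ij}·c_{3i}·c'_{3j} = c'_{ij}·c'_{3i}·c_{3j}` (i.e. `(c_{ij}:c'_{ij}) = (c'_{3i}c_{3j} : c_{3i}c'_{3j})`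
in `ℂP¹`) and `c_{3i}·c'_{3j} ≠ c'_{3i}·c_{3j}` (i.e. the points `(c_{3i}:c'_{3i})`,
`4 ≤ i ≤ n`, are pairwise distinct in `ℂP¹`). -/
theorem statement1 (n : ℕ) (hn : 5 ≤ n) (c c' : ℕ → ℕ → ℂ)
    (h : ∀ i j, 3 ≤ i → i < j → j ≤ n →
      c i j ≠ 0 ∧ c' i j ≠ 0 ∧ c i j ≠ c' i j) :
    (∀ i j k, 3 ≤ i → i < j → j < k → k ≤ n →
      c' i j * c i k * c' j k = c i j * c' i k * c j k) ↔
    (∀ i j, 4 ≤ i → i < j → j ≤ n →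
      c i j * (c 3 i * c' 3 j) = c' i j * (c' 3 i * c 3 j) ∧
      c 3 i * c' 3 j ≠ c' 3 i * c 3 j) := by
  constructor
  · intro hc i j hi hij hjn
    have h3i := h 3 i le_rfl (by omega) (by omega)
    have h3j := h 3 j le_rfl (by omega) hjn
    have hij' := h i j (by omega) hij hjn
    have e := hc 3 i j le_rfl (by omega) hij hjn
    refine ⟨by linear_combination -e, ?_⟩
    intro heq
    have h2 : c i j * (c 3 i * c' 3 j) = c' i j * (c 3 i * c' 3 j) := by
      rw [heq] at e ⊢
      linear_combination -e
    exact hij'.2.2 (mul_right_cancel₀ (mul_ne_zero h3i.1 h3j.2.1) h2)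
  · intro hb i j k hi hij hjk hkn
    by_cases h3 : i = 3
    · subst h3
      have b := hb j k (by omega) hjk hkn
      linear_combination -b.1
    · have b1 := hb i j (by omega) hij (by omega)
      have b2 := hb i k (by omega) (by omega) hkn
      have b3 := hb j k (by omega) hjk hkn
      have h3i := h 3 i (le_refl 3) (by omega) (by omega)
      have h3j := h 3 j (le_refl 3) (by omega) (by omega)
      have h3k := h 3 k (le_refl 3) (by omega) hkn
      have hD : (c 3 i * c' 3 j) * (c 3 i * c' 3 k) * (c 3 j * c' 3 k) ≠ 0 :=
        mul_ne_zero (mul_ne_zero (mul_ne_zero h3i.1 h3j.2.1)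
          (mul_ne_zero h3i.1 h3k.2.1)) (mul_ne_zero h3j.1 h3k.2.1)
      apply mul_right_cancel₀ hD
      linear_combination (c' i j * c' j k * (c 3 i * c' 3 j) * (c 3 j * c' 3 k)) * b2.1
        - (c' i k * (c 3 i * c' 3 k) * c j k * (c 3 j * c' 3 k)) * b1.1
        - (c' i j * (c' 3 i * c 3 j) * c' i k * (c 3 i * c' 3 k)) * b3.1
end

section
/- Let n ≥ 4, N = C(n−2,2), and let F_n ⊆ (ℂP^1)^N be the set of points ((c_{ij}:c'_{ij}))_{3 ≤ i < j ≤ n} satisfying the cubic relations c'_{ij}·c_{ik}·c'_{jk} = c_{ij}·c'_{ik}·c_{jk} for all triples and with every coordinate avoiding A = {(0:1),(1:0),(1:1)}. Then the projection onto the coordinates ((c_{34}:c'_{34}),…,(c_{3n}:c'_{3n})) is a homeomorphism from F_n (with the subspace topology) onto the space (ℂP^1∖A)^{n−3} ∖ Δ, where Δ is the union of the sets {points whose i-th and j-th coordinates coincide} over 4 ≤ i < j ≤ n. -/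
open Projectivization
open scoped LinearAlgebra.Projectivization

/-- The complex projective line `ℂP¹`, with homogeneous coordinates `(c : c')`. -/
abbrev CP1 : Type := Projectivization ℂ (Fin 2 → ℂ)

/-- `ℂP¹` carries the quotient topology coming from `ℂ² ∖ {0}`. -/
noncomputable instance : TopologicalSpace CP1 :=
  inferInstanceAs (TopologicalSpace (Quotient (projectivizationSetoid ℂ (Fin 2 → ℂ))))

lemma v01_ne_zero : (![0, 1] : Fin 2 → ℂ) ≠ 0 := by
  intro h; have := congrFun h 1; simp at this

lemma v10_ne_zero : (![1, 0] : Fin 2 → ℂ) ≠ 0 := by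
  intro h; have := congrFun h 0; simp at this

lemma v11_ne_zero : (![1, 1] : Fin 2 → ℂ) ≠ 0 := by
  intro h; have := congrFun h 0; simp at this

/-- The three special points `A = {(0:1), (1:0), (1:1)}` of `ℂP¹`. -/
noncomputable def setA : Set CP1 :=
  {Projectivization.mk ℂ ![0, 1] v01_ne_zero,
   Projectivization.mk ℂ ![1, 0] v10_ne_zero,
   Projectivization.mk ℂ ![1, 1] v11_ne_zero}

/-- The cubic relation `c'_{ij}·c_{ik}·c'_{jk} = c_{ij}·c'_{ik}·c_{jk}` for points
`x = (c_{ij}:c'_{ij})`, `y = (c_{ik}:c'_{ik})`, `z = (c_{jk}:c'_{jk})` of `ℂP¹`,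
expressed through (arbitrary) homogeneous representatives; the relation is
homogeneous of degree one in each point, hence independent of this choice. -/
def cubicRel (x y z : CP1) : Prop :=
  Projectivization.rep x 1 * Projectivization.rep y 0 * Projectivization.rep z 1
    = Projectivization.rep x 0 * Projectivization.rep y 1 * Projectivization.rep z 0

/-- The index set of pairs `3 ≤ i < j ≤ n`, of cardinality `N = C(n-2, 2)`. -/
def PairIdx (n : ℕ) : Type := {p : ℕ × ℕ // 3 ≤ p.1 ∧ p.1 < p.2 ∧ p.2 ≤ n}

/-- The index set `{4, …, n}` of the coordinates `(c_{34}:c'_{34}), …, (c_{3n}:c'_{3n})`. -/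
def ColIdx (n : ℕ) : Type := {j : ℕ // 4 ≤ j ∧ j ≤ n}

/-- The space of parameters `F_n ⊆ (ℂP¹)^N` of the main stratum: all cubic relations
hold and every coordinate avoids `A`. -/
def FnSet (n : ℕ) : Set (PairIdx n → CP1) :=
  {x | (∀ P, x P ∉ setA) ∧
    ∀ (i j k : ℕ) (h3 : 3 ≤ i) (hij : i < j) (hjk : j < k) (hkn : k ≤ n),
      cubicRel (x ⟨(i, j), h3, hij, le_trans (le_of_lt hjk) hkn⟩)
               (x ⟨(i, k), h3, lt_trans hij hjk, hkn⟩)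
               (x ⟨(j, k), le_trans h3 (le_of_lt hij), hjk, hkn⟩)}

/-- The space `(ℂP¹ ∖ A)^{n-3} ∖ Δ`, where `Δ` is the union of the diagonals
`{x | x i = x j}`, `4 ≤ i < j ≤ n`. -/
def TargetSet (n : ℕ) : Set (ColIdx n → CP1) :=
  {x | ∀ j, x j ∉ setA} \
    ⋃ (i : ColIdx n) (j : ColIdx n) (_ : i.val < j.val), {x | x i = x j}

section Aux

lemma vec2_ne_zero {a b : ℂ} (h : a ≠ 0) : (![a, b] : Fin 2 → ℂ) ≠ 0 := by
  intro h'; exact h (by simpa using congrFun h' 0)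

lemma vec2_eq_zero {v : Fin 2 → ℂ} (h0 : v 0 = 0) (h1 : v 1 = 0) : v = 0 := by
  funext i; fin_cases i <;> simpa

lemma vec2_ext {v w : Fin 2 → ℂ} (h0 : v 0 = w 0) (h1 : v 1 = w 1) : v = w := by
  funext i
  match i with
  | 0 => exact h0
  | 1 => exact h1

lemma mk_eq_mk_of_smul {v w : Fin 2 → ℂ} (hv : v ≠ 0) (hw : w ≠ 0) (c : ℂ) (hc : c ≠ 0)
    (h : c • w = v) : Projectivization.mk ℂ v hv = Projectivization.mk ℂ w hw :=
  (Projectivization.mk_eq_mk_iff ℂ v w hv hw).2 ⟨Units.mk0 c hc, h⟩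

/-- Characterization of membership in `setA` for `mk v`. -/
lemma mk_mem_setA_iff {v : Fin 2 → ℂ} (hv : v ≠ 0) :
    Projectivization.mk ℂ v hv ∈ setA ↔ v 0 = 0 ∨ v 1 = 0 ∨ v 0 = v 1 := by
  constructor
  · rintro (h | h | h)
    · obtain ⟨a, ha⟩ := (Projectivization.mk_eq_mk_iff ℂ _ _ hv v01_ne_zero).1 h
      left; have := congrFun ha 0; simpa [Units.smul_def] using this.symm
    · obtain ⟨a, ha⟩ := (Projectivization.mk_eq_mk_iff ℂ _ _ hv v10_ne_zero).1 h
      right; left; have := congrFun ha 1; simpa [Units.smul_def] using this.symm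
    · obtain ⟨a, ha⟩ := (Projectivization.mk_eq_mk_iff ℂ _ _ hv v11_ne_zero).1 h
      right; right
      have h0 := congrFun ha 0; have h1 := congrFun ha 1
      simp [Units.smul_def] at h0 h1
      rw [← h0, ← h1]
  · rintro (h | h | h)
    · have h1 : v 1 ≠ 0 := fun h1 => hv (vec2_eq_zero h h1)
      left
      exact mk_eq_mk_of_smul hv v01_ne_zero (v 1) h1 (by funext i; fin_cases i <;> simp [h])
    · have h0 : v 0 ≠ 0 := fun h0 => hv (vec2_eq_zero h0 h)
      right; left
      exact mk_eq_mk_of_smul hv v10_ne_zero (v 0) h0 (by funext i; fin_cases i <;> simp [h])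
    · have h0 : v 0 ≠ 0 := fun h0 => hv (vec2_eq_zero h0 (h ▸ h0))
      right; right
      exact mk_eq_mk_of_smul hv v11_ne_zero (v 0) h0 (by funext i; fin_cases i <;> simp [← h])

lemma rep_conds_of_not_mem_setA {x : CP1} (h : x ∉ setA) :
    x.rep 0 ≠ 0 ∧ x.rep 1 ≠ 0 ∧ x.rep 0 ≠ x.rep 1 := by
  rw [← Projectivization.mk_rep x, mk_mem_setA_iff x.rep_nonzero] at h
  push_neg at h
  exact h

lemma not_mem_setA_of_rep_conds {x : CP1} (h0 : x.rep 0 ≠ 0) (h1 : x.rep 1 ≠ 0)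
    (h01 : x.rep 0 ≠ x.rep 1) : x ∉ setA := by
  rw [← Projectivization.mk_rep x, mk_mem_setA_iff x.rep_nonzero]
  push_neg
  exact ⟨h0, h1, h01⟩

end Aux

section Ratio

/-- The point `(c'_{3i} c_{3j} : c_{3i} c'_{3j})` determined by `x = (c_{3i}:c'_{3i})` and
`y = (c_{3j}:c'_{3j})` through the cubic relation (with a junk value in degenerate cases). -/
noncomputable def ratio (x y : CP1) : CP1 :=
  if h : (![x.rep 1 * y.rep 0, x.rep 0 * y.rep 1] : Fin 2 → ℂ) ≠ 0 then
    Projectivization.mk ℂ _ h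
  else Projectivization.mk ℂ ![1, 0] v10_ne_zero

lemma ratio_eq_mk {x y : CP1} (h : x.rep 1 * y.rep 0 ≠ 0) :
    ratio x y = Projectivization.mk ℂ ![x.rep 1 * y.rep 0, x.rep 0 * y.rep 1]
      (vec2_ne_zero h) := by
  rw [ratio, dif_pos]

/-- The representative of `ratio x y` is a scalar multiple of the defining vector. -/
lemma ratio_rep {x y : CP1} (h : x.rep 1 * y.rep 0 ≠ 0) :
    ∃ c : ℂ, c ≠ 0 ∧ (ratio x y).rep 0 = c * (x.rep 1 * y.rep 0) ∧
      (ratio x y).rep 1 = c * (x.rep 0 * y.rep 1) := by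
  rw [ratio_eq_mk h]
  obtain ⟨a, ha⟩ := Projectivization.exists_smul_eq_mk_rep ℂ
    (![x.rep 1 * y.rep 0, x.rep 0 * y.rep 1]) (vec2_ne_zero h)
  refine ⟨(a : ℂ), a.ne_zero, ?_, ?_⟩
  · have := congrFun ha 0; simp [Units.smul_def] at this; rw [← this]
  · have := congrFun ha 1; simp [Units.smul_def] at this; rw [← this]

lemma ratio_mk {v w : Fin 2 → ℂ} (hv : v ≠ 0) (hw : w ≠ 0)
    (h0 : v 1 * w 0 ≠ 0) (h1 : v 0 * w 1 ≠ 0) :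
    ratio (Projectivization.mk ℂ v hv) (Projectivization.mk ℂ w hw)
      = Projectivization.mk ℂ ![v 1 * w 0, v 0 * w 1] (vec2_ne_zero h0) := by
  obtain ⟨a, ha⟩ := Projectivization.exists_smul_eq_mk_rep ℂ v hv
  obtain ⟨b, hb⟩ := Projectivization.exists_smul_eq_mk_rep ℂ w hw
  have ha0 := congrFun ha 0; have ha1 := congrFun ha 1
  have hb0 := congrFun hb 0; have hb1 := congrFun hb 1
  simp only [Units.smul_def, Pi.smul_apply, smul_eq_mul] at ha0 ha1 hb0 hb1
  have key : (Projectivization.mk ℂ v hv).rep 1 * (Projectivization.mk ℂ w hw).rep 0 ≠ 0 := by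
    rw [← ha1, ← hb0]
    exact mul_ne_zero (mul_ne_zero a.ne_zero (left_ne_zero_of_mul h0))
      (mul_ne_zero b.ne_zero (right_ne_zero_of_mul h0))
  rw [ratio_eq_mk key]
  refine mk_eq_mk_of_smul _ _ ((a : ℂ) * (b : ℂ)) (by simp [a.ne_zero, b.ne_zero]) ?_
  refine vec2_ext ?_ ?_ <;>
    simp only [Pi.smul_apply, smul_eq_mul, Matrix.cons_val_zero, Matrix.cons_val_one,
      Matrix.head_cons, ← ha0, ← ha1, ← hb0, ← hb1] <;> ring

lemma ratio_not_mem_setA {x y : CP1} (hx : x ∉ setA) (hy : y ∉ setA) (hxy : x ≠ y) :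
    ratio x y ∉ setA := by
  obtain ⟨hx0, hx1, _⟩ := rep_conds_of_not_mem_setA hx
  obtain ⟨hy0, hy1, _⟩ := rep_conds_of_not_mem_setA hy
  rw [ratio_eq_mk (mul_ne_zero hx1 hy0), mk_mem_setA_iff]
  push_neg
  refine ⟨by simpa using mul_ne_zero hx1 hy0, by simpa using mul_ne_zero hx0 hy1, ?_⟩
  simp only [Matrix.cons_val_zero, Matrix.cons_val_one, Matrix.head_cons]
  intro hcontra
  apply hxy
  rw [← Projectivization.mk_rep x, ← Projectivization.mk_rep y]
  refine mk_eq_mk_of_smul _ _ (x.rep 0 / y.rep 0) (div_ne_zero hx0 hy0) ?_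
  refine vec2_ext ?_ ?_
  · simp only [Pi.smul_apply, smul_eq_mul]
    exact div_mul_cancel₀ _ hy0
  · simp only [Pi.smul_apply, smul_eq_mul]
    rw [div_mul_eq_mul_div, div_eq_iff hy0]
    linear_combination -hcontra

/-- If `z` satisfies the cubic relation with `x, y` whose relevant coordinates are
nonzero, then `z = ratio x y`. -/
lemma eq_ratio_of_cubicRel {x y z : CP1} (h : cubicRel x y z)
    (h10 : x.rep 1 * y.rep 0 ≠ 0) (h01 : x.rep 0 * y.rep 1 ≠ 0) : z = ratio x y := by
  rw [ratio_eq_mk h10, ← Projectivization.mk_rep z]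
  have hz0 : z.rep 0 ≠ 0 := by
    intro hz0
    have h' := h
    rw [cubicRel, hz0, mul_zero] at h'
    rcases mul_eq_zero.1 h' with hh | hh
    · exact h10 hh
    · exact z.rep_nonzero (vec2_eq_zero hz0 hh)
  refine mk_eq_mk_of_smul _ _ (z.rep 0 / (x.rep 1 * y.rep 0)) (div_ne_zero hz0 h10) ?_
  refine vec2_ext ?_ ?_
  · simp only [Pi.smul_apply, smul_eq_mul, Matrix.cons_val_zero]
    exact div_mul_cancel₀ _ h10
  · simp only [Pi.smul_apply, smul_eq_mul, Matrix.cons_val_one, Matrix.head_cons,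
      Matrix.cons_val_zero]
    rw [div_mul_eq_mul_div, div_eq_iff h10]
    rw [cubicRel] at h
    linear_combination -h

/-- The cubic relation holds for `x, y, ratio x y`. -/
lemma cubicRel_ratio {x y : CP1} (h10 : x.rep 1 * y.rep 0 ≠ 0) :
    cubicRel x y (ratio x y) := by
  obtain ⟨c, hc, hc0, hc1⟩ := ratio_rep h10
  rw [cubicRel, hc0, hc1]; ring

/-- The cubic relation among three ratio points. -/
lemma cubicRel_ratio₃ {x y z : CP1} (hx : x ∉ setA) (hy : y ∉ setA) (hz : z ∉ setA) :
    cubicRel (ratio x y) (ratio x z) (ratio y z) := by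
  obtain ⟨hx0, hx1, _⟩ := rep_conds_of_not_mem_setA hx
  obtain ⟨hy0, hy1, _⟩ := rep_conds_of_not_mem_setA hy
  obtain ⟨hz0, hz1, _⟩ := rep_conds_of_not_mem_setA hz
  obtain ⟨c1, hc1, hc10, hc11⟩ := ratio_rep (mul_ne_zero hx1 hy0)
  obtain ⟨c2, hc2, hc20, hc21⟩ := ratio_rep (mul_ne_zero hx1 hz0)
  obtain ⟨c3, hc3, hc30, hc31⟩ := ratio_rep (mul_ne_zero hy1 hz0)
  rw [cubicRel, hc10, hc11, hc20, hc21, hc30, hc31]; ring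

end Ratio

section Topology

/-- The nonzero vectors of `ℂ²`. -/
abbrev Vnz : Type := { v : Fin 2 → ℂ // v ≠ 0 }

/-- The quotient map `ℂ² ∖ {0} → ℂP¹`. -/
noncomputable def qmap (v : Vnz) : CP1 := Projectivization.mk ℂ v.1 v.2

lemma qmap_eq : qmap = @Quotient.mk' _ (projectivizationSetoid ℂ (Fin 2 → ℂ)) := rfl

lemma continuous_qmap : Continuous qmap := by
  rw [qmap_eq]
  exact continuous_quotient_mk' (s := projectivizationSetoid ℂ (Fin 2 → ℂ))

lemma surjective_qmap : Function.Surjective qmap := fun x =>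
  ⟨⟨x.rep, x.rep_nonzero⟩, x.mk_rep⟩

/-- Scaling by a unit as a self-map of `Vnz`. -/
def scl (c : ℂˣ) (v : Vnz) : Vnz := ⟨(c : ℂ) • v.1, smul_ne_zero c.ne_zero v.2⟩

lemma continuous_scl (c : ℂˣ) : Continuous (scl c) :=
  (continuous_const_smul ((c : ℂ))).comp continuous_subtype_val |>.subtype_mk _

lemma scl_scl (c : ℂˣ) (v : Vnz) : scl c⁻¹ (scl c v) = v := by
  apply Subtype.ext
  simp [scl, smul_smul]

lemma isOpenMap_scl (c : ℂˣ) : IsOpenMap (scl c) := by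
  intro U hU
  have himg : scl c '' U = scl c⁻¹ ⁻¹' U := by
    ext w
    constructor
    · rintro ⟨u, hu, rfl⟩
      simpa [Set.mem_preimage, scl_scl] using hu
    · intro hw
      exact ⟨scl c⁻¹ w, hw, by simpa using scl_scl c⁻¹ w⟩
  rw [himg]
  exact hU.preimage (continuous_scl c⁻¹)

lemma isOpenMap_qmap : IsOpenMap qmap := by
  intro U hU
  rw [qmap_eq]
  refine (isQuotientMap_quotient_mk' (s := projectivizationSetoid ℂ (Fin 2 → ℂ))).isOpen_preimage.mp ?_
  have : @Quotient.mk' _ (projectivizationSetoid ℂ (Fin 2 → ℂ)) ⁻¹'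
      (@Quotient.mk' _ (projectivizationSetoid ℂ (Fin 2 → ℂ)) '' U)
      = ⋃ c : ℂˣ, scl c '' U := by
    ext v
    simp only [Set.mem_preimage, Set.mem_image, Set.mem_iUnion]
    constructor
    · rintro ⟨u, hu, he⟩
      have he' : Projectivization.mk ℂ u.1 u.2 = Projectivization.mk ℂ v.1 v.2 := he
      obtain ⟨a, ha⟩ := (Projectivization.mk_eq_mk_iff ℂ _ _ u.2 v.2).1 he'
      refine ⟨a⁻¹, u, hu, ?_⟩
      apply Subtype.ext
      show ((a⁻¹ : ℂˣ) : ℂ) • u.1 = v.1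
      rw [← ha, Units.smul_def, smul_smul]
      simp
    · rintro ⟨c, u, hu, rfl⟩
      refine ⟨u, hu, ?_⟩
      show Projectivization.mk ℂ u.1 u.2 = Projectivization.mk ℂ ((c:ℂ) • u.1) _
      exact ((Projectivization.mk_eq_mk_iff ℂ _ _ _ u.2).2 ⟨c, rfl⟩).symm
  erw [this]
  exact isOpen_iUnion fun c => isOpenMap_scl c U hU

/-- The subtype of `ℂP¹` avoiding the three special points. -/
abbrev Bsp : Type := { x : CP1 // x ∉ setA }

/-- Vectors with both coordinates nonzero and distinct. -/
abbrev VnzB : Type := { v : Fin 2 → ℂ // v 0 ≠ 0 ∧ v 1 ≠ 0 ∧ v 0 ≠ v 1 }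

lemma VnzB.ne_zero (v : VnzB) : v.1 ≠ 0 := fun h => v.2.1 (by rw [h]; rfl)

/-- The restricted quotient map `VnzB → Bsp`. -/
noncomputable def qmapB (v : VnzB) : Bsp :=
  ⟨Projectivization.mk ℂ v.1 v.ne_zero, by
    rw [mk_mem_setA_iff]
    push_neg
    exact v.2⟩

lemma continuous_qmapB : Continuous qmapB := by
  refine Continuous.subtype_mk ?_ _
  exact continuous_qmap.comp (Continuous.subtype_mk continuous_subtype_val VnzB.ne_zero)

lemma surjective_qmapB : Function.Surjective qmapB := by
  intro x
  obtain ⟨h0, h1, h01⟩ := rep_conds_of_not_mem_setA x.2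
  exact ⟨⟨x.1.rep, h0, h1, h01⟩, Subtype.ext (x.1.mk_rep)⟩

lemma isOpenMap_qmapB : IsOpenMap qmapB := by
  intro U hU
  obtain ⟨U₀, hU₀, rfl⟩ := isOpen_induced_iff.1 hU
  set W : Set Vnz := Subtype.val ⁻¹' U₀ with hW
  have hWopen : IsOpen W := hU₀.preimage continuous_subtype_val
  have key : qmapB '' (Subtype.val ⁻¹' U₀) = Subtype.val ⁻¹' (qmap '' W) := by
    ext x
    constructor
    · rintro ⟨v, hv, rfl⟩
      exact ⟨⟨v.1, v.ne_zero⟩, hv, rfl⟩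
    · rintro ⟨w, hw, hx⟩
      have hxA : qmap w ∉ setA := hx ▸ x.2
      rw [qmap, mk_mem_setA_iff] at hxA
      push_neg at hxA
      refine ⟨⟨w.1, hxA⟩, hw, ?_⟩
      apply Subtype.ext
      exact hx
  rw [key]
  exact (isOpenMap_qmap W hWopen).preimage continuous_subtype_val

lemma isOpenQuotientMap_qmapB : IsOpenQuotientMap qmapB :=
  ⟨surjective_qmapB, continuous_qmapB, isOpenMap_qmapB⟩

/-- Continuity of the ratio map on `Bsp × Bsp`. -/
lemma continuous_ratio : Continuous (fun p : Bsp × Bsp => ratio p.1.1 p.2.1) := by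
  rw [((isOpenQuotientMap_qmapB.prodMap isOpenQuotientMap_qmapB).isQuotientMap).continuous_iff]
  have heq : ∀ p : VnzB × VnzB,
      ((fun p : Bsp × Bsp => ratio p.1.1 p.2.1) ∘ Prod.map qmapB qmapB) p
        = qmap ⟨![p.1.1 1 * p.2.1 0, p.1.1 0 * p.2.1 1],
            vec2_ne_zero (mul_ne_zero p.1.2.2.1 p.2.2.1)⟩ := by
    intro p
    show ratio (Projectivization.mk ℂ p.1.1 p.1.ne_zero) (Projectivization.mk ℂ p.2.1 p.2.ne_zero) = _
    rw [ratio_mk p.1.ne_zero p.2.ne_zero (mul_ne_zero p.1.2.2.1 p.2.2.1)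
      (mul_ne_zero p.1.2.1 p.2.2.2.1)]
    rfl
  refine Continuous.congr ?_ (fun p => (heq p).symm)
  refine continuous_qmap.comp (Continuous.subtype_mk ?_ _)
  refine continuous_pi fun i => ?_
  fin_cases i
  · exact (((continuous_apply 1).comp (continuous_subtype_val.comp continuous_fst)).mul
      ((continuous_apply 0).comp (continuous_subtype_val.comp continuous_snd)))
  · exact (((continuous_apply 0).comp (continuous_subtype_val.comp continuous_fst)).mul
      ((continuous_apply 1).comp (continuous_subtype_val.comp continuous_snd)))

end Topology

section Main

variable {n : ℕ}

/-- The forward (projection) map on underlying tuples. -/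
def fwdFun (n : ℕ) (x : PairIdx n → CP1) : ColIdx n → CP1 := fun j =>
  x ⟨(3, j.1), le_refl 3, lt_of_lt_of_le (by norm_num) j.2.1, j.2.2⟩

/-- The inverse map on underlying tuples. -/
noncomputable def invF (n : ℕ) (y : ColIdx n → CP1) : PairIdx n → CP1 := fun P =>
  if _ : P.1.1 = 3 then
    y ⟨P.1.2, by have h1 := P.2.1; have h2 := P.2.2.1; omega, P.2.2.2⟩
  else
    ratio (y ⟨P.1.1, by have h1 := P.2.1; omega,
            le_trans (le_of_lt P.2.2.1) P.2.2.2⟩)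
          (y ⟨P.1.2, by have h1 := P.2.1; have h2 := P.2.2.1; omega, P.2.2.2⟩)

lemma invF_pos (y : ColIdx n → CP1) (P : PairIdx n) (h : P.1.1 = 3) :
    invF n y P = y ⟨P.1.2, by have h1 := P.2.1; have h2 := P.2.2.1; omega, P.2.2.2⟩ :=
  dif_pos h

lemma invF_neg (y : ColIdx n → CP1) (P : PairIdx n) (h : ¬ P.1.1 = 3) :
    invF n y P = ratio
      (y ⟨P.1.1, by have h1 := P.2.1; omega, le_trans (le_of_lt P.2.2.1) P.2.2.2⟩)
      (y ⟨P.1.2, by have h1 := P.2.1; have h2 := P.2.2.1; omega, P.2.2.2⟩) :=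
  dif_neg h

lemma target_ne {y : ColIdx n → CP1} (hy : y ∈ TargetSet n) {i j : ColIdx n}
    (hij : i.1 < j.1) : y i ≠ y j := fun he =>
  hy.2 (Set.mem_iUnion.2 ⟨i, Set.mem_iUnion.2 ⟨j, Set.mem_iUnion.2 ⟨hij, he⟩⟩⟩)

lemma fwd_mem {x : PairIdx n → CP1} (hx : x ∈ FnSet n) : fwdFun n x ∈ TargetSet n := by
  constructor
  · intro j; exact hx.1 _
  · intro hmem
    rw [Set.mem_iUnion] at hmem; obtain ⟨i, hmem⟩ := hmem
    rw [Set.mem_iUnion] at hmem; obtain ⟨j, hmem⟩ := hmem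
    rw [Set.mem_iUnion] at hmem; obtain ⟨hij, he⟩ := hmem
    have he' : x ⟨(3, i.1), le_refl 3, lt_of_lt_of_le (by norm_num) i.2.1, i.2.2⟩
        = x ⟨(3, j.1), le_refl 3, lt_of_lt_of_le (by norm_num) j.2.1, j.2.2⟩ := he
    have hc := hx.2 3 i.1 j.1 (le_refl 3) (lt_of_lt_of_le (by norm_num) i.2.1) hij j.2.2
    rw [cubicRel, he'] at hc
    obtain ⟨ha0, ha1, _⟩ := rep_conds_of_not_mem_setA
      (hx.1 ⟨(3, j.1), le_refl 3, lt_of_lt_of_le (by norm_num) j.2.1, j.2.2⟩)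
    obtain ⟨_, _, hz01⟩ := rep_conds_of_not_mem_setA
      (hx.1 ⟨(i.1, j.1), le_trans (le_refl 3) (le_of_lt (lt_of_lt_of_le (by norm_num) i.2.1)),
        hij, j.2.2⟩)
    apply hz01
    apply mul_left_cancel₀ (mul_ne_zero ha1 ha0)
    linear_combination -hc

lemma inv_mem {y : ColIdx n → CP1} (hy : y ∈ TargetSet n) : invF n y ∈ FnSet n := by
  constructor
  · intro P
    by_cases h : P.1.1 = 3
    · rw [invF_pos y P h]
      exact hy.1 _
    · rw [invF_neg y P h]
      exact ratio_not_mem_setA (hy.1 _) (hy.1 _) (target_ne hy P.2.2.1)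
  · intro i j k h3 hij hjk hkn
    by_cases h : i = 3
    · subst h
      erw [invF_pos _ _ rfl, invF_pos _ _ rfl,
        invF_neg y ⟨(j, k), by omega, hjk, hkn⟩ (show ¬ j = 3 by omega)]
      obtain ⟨hj0, hj1, _⟩ := rep_conds_of_not_mem_setA
        (hy.1 (⟨j, by omega, le_trans (le_of_lt hjk) hkn⟩ : ColIdx n))
      obtain ⟨hk0, hk1, _⟩ := rep_conds_of_not_mem_setA
        (hy.1 (⟨k, by omega, hkn⟩ : ColIdx n))
      exact cubicRel_ratio (mul_ne_zero hj1 hk0)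
    · erw [invF_neg y ⟨(i, j), h3, hij, by omega⟩ (show ¬ i = 3 from h),
        invF_neg y ⟨(i, k), h3, by omega, hkn⟩ (show ¬ i = 3 from h),
        invF_neg y ⟨(j, k), by omega, hjk, hkn⟩ (show ¬ j = 3 by omega)]
      exact cubicRel_ratio₃ (hy.1 _) (hy.1 _) (hy.1 _)

/-- The underlying equivalence. -/
noncomputable def mainEquiv (n : ℕ) : FnSet n ≃ TargetSet n where
  toFun x := ⟨fwdFun n x.1, fwd_mem x.2⟩
  invFun y := ⟨invF n y.1, inv_mem y.2⟩
  left_inv x := by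
    apply Subtype.ext
    funext P
    show invF n (fwdFun n x.1) P = x.1 P
    by_cases h : P.1.1 = 3
    · rw [invF_pos _ P h]
      have hP : P = (⟨(3, P.1.2), le_refl 3,
          by have := P.2.1; have := P.2.2.1; omega, P.2.2.2⟩ : PairIdx n) :=
        Subtype.ext (Prod.ext h rfl)
      conv_rhs => rw [hP]
      rfl
    · rw [invF_neg _ P h]
      obtain ⟨hi0, hi1, _⟩ := rep_conds_of_not_mem_setA
        (x.2.1 ⟨(3, P.1.1), le_refl 3, by have := P.2.1; omega,
          le_trans (le_of_lt P.2.2.1) P.2.2.2⟩)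
      obtain ⟨hj0, hj1, _⟩ := rep_conds_of_not_mem_setA
        (x.2.1 ⟨(3, P.1.2), le_refl 3, by have := P.2.1; have := P.2.2.1; omega, P.2.2.2⟩)
      have hc := x.2.2 3 P.1.1 P.1.2 (le_refl 3) (by have := P.2.1; omega)
        P.2.2.1 P.2.2.2
      exact (eq_ratio_of_cubicRel hc (mul_ne_zero hi1 hj0) (mul_ne_zero hi0 hj1)).symm
  right_inv y := by
    apply Subtype.ext
    funext j
    show fwdFun n (invF n y.1) j = y.1 j
    rw [show fwdFun n (invF n y.1) j
      = invF n y.1 ⟨(3, j.1), le_refl 3, lt_of_lt_of_le (by norm_num) j.2.1, j.2.2⟩ from rfl]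
    erw [invF_pos _ _ rfl]
    rfl

lemma mycont_fwd : Continuous fun x : FnSet n => (⟨fwdFun n x.1, fwd_mem x.2⟩ : TargetSet n) := by
  refine Continuous.subtype_mk ?_ _
  refine continuous_pi fun j => ?_
  show Continuous fun x : FnSet n =>
    x.1 ⟨(3, j.1), le_refl 3, lt_of_lt_of_le (by norm_num) j.2.1, j.2.2⟩
  exact (continuous_apply _).comp continuous_subtype_val

lemma mycont_inv : Continuous fun y : TargetSet n => (⟨invF n y.1, inv_mem y.2⟩ : FnSet n) := by
  refine Continuous.subtype_mk ?_ _
  refine continuous_pi fun P => ?_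
  show Continuous fun y : TargetSet n => invF n y.1 P
  by_cases h : P.1.1 = 3
  · simp only [fun y : TargetSet n => invF_pos y.1 P h]
    exact (continuous_apply _).comp continuous_subtype_val
  · simp only [fun y : TargetSet n => invF_neg y.1 P h]
    have heq : (fun y : TargetSet n => ratio
        (y.1 ⟨P.1.1, by have h1 := P.2.1; omega, le_trans (le_of_lt P.2.2.1) P.2.2.2⟩)
        (y.1 ⟨P.1.2, by have h1 := P.2.1; have h2 := P.2.2.1; omega, P.2.2.2⟩))
        = (fun p : Bsp × Bsp => ratio p.1.1 p.2.1) ∘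
          (fun y : TargetSet n =>
            ((⟨y.1 ⟨P.1.1, by have h1 := P.2.1; omega, le_trans (le_of_lt P.2.2.1) P.2.2.2⟩,
                y.2.1 _⟩ : Bsp),
             (⟨y.1 ⟨P.1.2, by have h1 := P.2.1; have h2 := P.2.2.1; omega, P.2.2.2⟩,
                y.2.1 _⟩ : Bsp))) := rfl
    rw [heq]
    refine continuous_ratio.comp (Continuous.prodMk ?_ ?_)
    · exact Continuous.subtype_mk ((continuous_apply _).comp continuous_subtype_val) _
    · exact Continuous.subtype_mk ((continuous_apply _).comp continuous_subtype_val) _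

end Main


/-- For `n ≥ 4`, the projection onto the coordinates
`((c_{34}:c'_{34}), …, (c_{3n}:c'_{3n}))` is a homeomorphism from `F_n` (with the
subspace topology) onto `(ℂP¹ ∖ A)^{n-3} ∖ Δ`. -/
theorem statement2 (n : ℕ) (hn : 4 ≤ n) :
    ∃ e : FnSet n ≃ₜ TargetSet n,
      ∀ (x : FnSet n) (j : ColIdx n),
        (e x).val j
          = x.val ⟨(3, j.val),
              le_refl 3, lt_of_lt_of_le (by norm_num) j.2.1, j.2.2⟩ := by
  refine ⟨⟨mainEquiv n, mycont_fwd, mycont_inv⟩, ?_⟩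
  intro x j
  rfl
end

section
/- Let n ≥ 4, fix 3 ≤ j ≤ n, and let z_3,…,z_n, w_3,…,w_n ∈ ℂ be a main-stratum point in the chart M_{12} (z_k ≠ 0, w_k ≠ 0, z_k·w_l ≠ z_l·w_k for k ≠ l), with parameters c_{kl} := z_k·w_l, c'_{kl} := z_l·w_k. Define the chart-M_{1j} coordinates z'_2 = −z_j/w_j, z'_k = (z_k·w_j − z_j·w_k)/w_j, w'_2 = 1/w_j, w'_k = w_k/w_j for k ∈ {3,…,n}∖{j}, and set d_{kl} := z'_k·w'_l, d'_{kl} := z'_l·w'_k. Then for every l ∈ {3,…,n}∖{j}: d_{2l}·(c_{jl} − c'_{jl}) = d'_{2l}·c_{jl}, i.e. (d_{2l}:d'_{2l}) = (c_{jl} : c_{jl} − c'_{jl}); and for all k < l in {3,…,n}∖{j}: d_{kl}·c_{jk}·(c_{jl} − c'_{jl}) = d'_{kl}·c_{jl}·(c_{jk} − c'_{jk}), i.e. (d_{kl}:d'_{kl}) = (c_{jl}(c_{jk} − c'_{jk}) : c_{jk}(c_{jl} − c'_{jl})). -/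
/-- Chart change `M₁₂ → M₁ⱼ` on the space of parameters of the main
stratum (Lemma `jedan`).  For a main-stratum point `z, w` in the chart `M₁₂` with
parameters `c k l = z k * w l`, `c' k l = z l * w k`, the chart-`M₁ⱼ` coordinates
`z'₂ = -zⱼ/wⱼ`, `z'ₖ = (zₖwⱼ - zⱼwₖ)/wⱼ`, `w'₂ = 1/wⱼ`, `w'ₖ = wₖ/wⱼ` have parameters
`d k l = z' k * w' l`, `d' k l = z' l * w' k` satisfying
`(d_{2l}:d'_{2l}) = (c_{jl} : c_{jl} - c'_{jl})` and
`(d_{kl}:d'_{kl}) = (c_{jl}(c_{jk} - c'_{jk}) : c_{jk}(c_{jl} - c'_{jl}))`,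
written as cross-multiplied equalities. -/
theorem statement5 (n : ℕ) (hn : 4 ≤ n) (j : ℕ) (hj3 : 3 ≤ j) (hjn : j ≤ n)
    (z w : ℕ → ℂ)
    (hz : ∀ k, 3 ≤ k → k ≤ n → z k ≠ 0)
    (hw : ∀ k, 3 ≤ k → k ≤ n → w k ≠ 0)
    (hP : ∀ k l, 3 ≤ k → k ≤ n → 3 ≤ l → l ≤ n → k ≠ l → z k * w l ≠ z l * w k)
    (c c' : ℕ → ℕ → ℂ)
    (hc : ∀ k l, c k l = z k * w l) (hc' : ∀ k l, c' k l = z l * w k)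
    (z' w' : ℕ → ℂ)
    (hz'2 : z' 2 = -z j / w j)
    (hz'k : ∀ k, 3 ≤ k → k ≤ n → k ≠ j → z' k = (z k * w j - z j * w k) / w j)
    (hw'2 : w' 2 = 1 / w j)
    (hw'k : ∀ k, 3 ≤ k → k ≤ n → k ≠ j → w' k = w k / w j)
    (d d' : ℕ → ℕ → ℂ)
    (hd : ∀ k l, d k l = z' k * w' l) (hd' : ∀ k l, d' k l = z' l * w' k) :
    (∀ l, 3 ≤ l → l ≤ n → l ≠ j →
      d 2 l * (c j l - c' j l) = d' 2 l * c j l) ∧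
    (∀ k l, 3 ≤ k → k < l → l ≤ n → k ≠ j → l ≠ j →
      d k l * (c j k * (c j l - c' j l)) = d' k l * (c j l * (c j k - c' j k))) := by
  have hwj : w j ≠ 0 := hw j hj3 hjn
  constructor
  · intro l h3 hn' hlj
    rw [hd, hd', hz'2, hw'2, hz'k l h3 hn' hlj, hw'k l h3 hn' hlj, hc, hc']
    field_simp
    ring
  · intro k l h3k hkl hln hkj hlj
    rw [hd, hd', hz'k k h3k (le_of_lt (lt_of_lt_of_le hkl hln)) hkj,
      hw'k k h3k (le_of_lt (lt_of_lt_of_le hkl hln)) hkj,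
      hz'k l (le_trans h3k (le_of_lt hkl)) hln hlj,
      hw'k l (le_trans h3k (le_of_lt hkl)) hln hlj, hc, hc', hc, hc']
    field_simp
    ring
end

section
/- Let n ≥ 4, fix 3 ≤ j ≤ n, and let z_3,…,z_n, w_3,…,w_n ∈ ℂ be a main-stratum point in the chart M_{12} (z_k ≠ 0, w_k ≠ 0, z_k·w_l ≠ z_l·w_k for k ≠ l), with parameters c_{kl} := z_k·w_l, c'_{kl} := z_l·w_k. Define the chart-M_{2j} coordinates z'_1 = −w_j/z_j, z'_k = (z_j·w_k − z_k·w_j)/z_j, w'_1 = 1/z_j, w'_k = z_k/z_j for k ∈ {3,…,n}∖{j}, and set d_{kl} := z'_k·w'_l, d'_{kl} := z'_l·w'_k. Then for every l ∈ {3,…,n}∖{j}: d_{1l}·(c'_{jl} − c_{jl}) = d'_{1l}·c'_{jl}, i.e. (d_{1l}:d'_{1l}) = (c'_{jl} : c'_{jl} − c_{jl}); and for all k < l in {3,…,n}∖{j}: d_{kl}·c'_{jk}·(c_{jl} − c'_{jl}) = d'_{kl}·c'_{jl}·(c_{jk} − c'_{jk}), i.e. (d_{kl}:d'_{kl}) =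 (c'_{jl}(c_{jk} − c'_{jk}) : c'_{jk}(c_{jl} − c'_{jl})). -/
/-- Chart change `M₁₂ → M₂ⱼ` on the space of parameters of the main
stratum (Lemma `dva`).  For a main-stratum point `z, w` in the chart `M₁₂` with
parameters `c k l = z k * w l`, `c' k l = z l * w k`, the chart-`M₂ⱼ` coordinates
`z'₁ = -wⱼ/zⱼ`, `z'ₖ = (zⱼwₖ - zₖwⱼ)/zⱼ`, `w'₁ = 1/zⱼ`, `w'ₖ = zₖ/zⱼ` have parameters
`d k l = z' k * w' l`, `d' k l = z' l * w' k` satisfying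
`(d_{1l}:d'_{1l}) = (c'_{jl} : c'_{jl} - c_{jl})` and
`(d_{kl}:d'_{kl}) = (c'_{jl}(c_{jk} - c'_{jk}) : c'_{jk}(c_{jl} - c'_{jl}))`,
written as cross-multiplied equalities. -/
theorem statement7 (n : ℕ) (hn : 4 ≤ n) (j : ℕ) (hj3 : 3 ≤ j) (hjn : j ≤ n)
    (z w : ℕ → ℂ)
    (hz : ∀ k, 3 ≤ k → k ≤ n → z k ≠ 0)
    (hw : ∀ k, 3 ≤ k → k ≤ n → w k ≠ 0)
    (hP : ∀ k l, 3 ≤ k → k ≤ n → 3 ≤ l → l ≤ n → k ≠ l → z k * w l ≠ z l * w k)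
    (c c' : ℕ → ℕ → ℂ)
    (hc : ∀ k l, c k l = z k * w l) (hc' : ∀ k l, c' k l = z l * w k)
    (z' w' : ℕ → ℂ)
    (hz'1 : z' 1 = -w j / z j)
    (hz'k : ∀ k, 3 ≤ k → k ≤ n → k ≠ j → z' k = (z j * w k - z k * w j) / z j)
    (hw'1 : w' 1 = 1 / z j)
    (hw'k : ∀ k, 3 ≤ k → k ≤ n → k ≠ j → w' k = z k / z j)
    (d d' : ℕ → ℕ → ℂ)
    (hd : ∀ k l, d k l = z' k * w' l) (hd' : ∀ k l, d' k l = z' l * w' k) :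
    (∀ l, 3 ≤ l → l ≤ n → l ≠ j →
      d 1 l * (c' j l - c j l) = d' 1 l * c' j l) ∧
    (∀ k l, 3 ≤ k → k < l → l ≤ n → k ≠ j → l ≠ j →
      d k l * (c' j k * (c j l - c' j l)) = d' k l * (c' j l * (c j k - c' j k))) := by
  have hzj := hz j hj3 hjn
  constructor
  · intro l h3 hln hlj
    rw [hd, hd', hz'1, hw'1, hz'k l h3 hln hlj, hw'k l h3 hln hlj]; simp only [hc, hc']
    field_simp
    ring
  · intro k l h3k hkl hln hkj hlj
    have h3l : 3 ≤ l := le_trans h3k hkl.le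
    have hkn : k ≤ n := le_trans hkl.le hln
    rw [hd, hd', hz'k k h3k hkn hkj, hw'k k h3k hkn hkj,
        hz'k l h3l hln hlj, hw'k l h3l hln hlj]; simp only [hc, hc']
    field_simp
end

section
/- Let n ≥ 5 and let (c_{3j}, c'_{3j}) ∈ ℂ² be given for 4 ≤ j ≤ n. Define c_{ij} := c'_{3i}·c_{3j} and c'_{ij} := c_{3i}·c'_{3j} for 4 ≤ i < j ≤ n. Then the full family (c_{ij}, c'_{ij}), 3 ≤ i < j ≤ n, satisfies every cubic relation c'_{ij}·c_{ik}·c'_{jk} = c_{ij}·c'_{ik}·c_{jk} for 3 ≤ i < j < k ≤ n. In particular, wherever the map f : (ℂP^1)^{n−3} → (ℂP^1)^N given by ((c_{3j}:c'_{3j}))_j ↦ ((c_{3j}:c'_{3j}))_j ∪ ((c'_{3i}c_{3j} : c_{3i}c'_{3j}))_{4 ≤ i < j ≤ n} is defined, its image lies in F̄_n. -/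
/-- Let `n ≥ 5` and let `(c₃ⱼ, c'₃ⱼ) ∈ ℂ²` be given for `4 ≤ j ≤ n`.
Define `c_{ij} := c'₃ᵢ·c₃ⱼ` and `c'_{ij} := c₃ᵢ·c'₃ⱼ` for `4 ≤ i < j ≤ n`.  Then the full
family `(c_{ij}, c'_{ij})`, `3 ≤ i < j ≤ n`, satisfies every cubic relation
`c'_{ij}·c_{ik}·c'_{jk} = c_{ij}·c'_{ik}·c_{jk}`, `3 ≤ i < j < k ≤ n`; in particular,
wherever the rational map `f : (ℂP¹)^{n-3} → (ℂP¹)^N` is defined, its image lies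
in `F̄_n`. -/
theorem statement12 (n : ℕ) (hn : 5 ≤ n) (c3 c'3 : ℕ → ℂ)
    (c c' : ℕ → ℕ → ℂ)
    (hc3 : ∀ j, 4 ≤ j → j ≤ n → c 3 j = c3 j)
    (hc'3 : ∀ j, 4 ≤ j → j ≤ n → c' 3 j = c'3 j)
    (hc : ∀ i j, 4 ≤ i → i < j → j ≤ n → c i j = c'3 i * c3 j)
    (hc' : ∀ i j, 4 ≤ i → i < j → j ≤ n → c' i j = c3 i * c'3 j) :
    ∀ i j k, 3 ≤ i → i < j → j < k → k ≤ n →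
      c' i j * c i k * c' j k = c i j * c' i k * c j k := by
  intro i j k hi hij hjk hk
  rcases eq_or_lt_of_le hi with h3 | h4
  · -- i = 3
    subst h3
    have hj4 : 4 ≤ j := hij
    have hk4 : 4 ≤ k := le_trans hj4 (le_of_lt hjk)
    rw [hc3 j hj4 (le_trans (le_of_lt hjk) hk), hc'3 j hj4 (le_trans (le_of_lt hjk) hk),
      hc3 k hk4 hk, hc'3 k hk4 hk, hc j k hj4 hjk hk, hc' j k hj4 hjk hk]
    ring
  · -- 4 ≤ i
    have hi4 : 4 ≤ i := h4
    rw [hc i j hi4 hij (le_trans (le_of_lt hjk) hk), hc' i j hi4 hij (le_trans (le_of_lt hjk) hk),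
      hc i k hi4 (lt_trans hij hjk) hk, hc' i k hi4 (lt_trans hij hjk) hk,
      hc j k (le_trans hi4 (le_of_lt hij)) hjk hk, hc' j k (le_trans hi4 (le_of_lt hij)) hjk hk]
    ring
end

section
/- Let Δ_{5,2} ⊂ ℝ^5 be the hypersimplex, i.e. the convex hull of the ten points Λ_{pq} = e_p + e_q, 1 ≤ p < q ≤ 5, where e_1,…,e_5 is the standard basis. For distinct i, j ∈ {1,…,5} let P_{ij} be the convex hull of {Λ_{ij}} ∪ {Λ_{ik}, Λ_{jk} : k ∉ {i,j}} (the seven-sided pyramid with apex Λ_{ij}) and let K_{ij} be the convex hull of the nine vertices {Λ_{pq} : {p,q} ≠ {i,j}}. Then P_{ij} ∪ K_{ij} = Δ_{5,2} and the relative interiors of P_{ij} and K_{ij} (interiors within the affine hyperplane x_1+⋯+x_5 = 2) are disjoint; that is, the pair {K_{ij}, P_{ij}} is a polyhedral decomposition of Δ_{5,2}. -/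
/-- The vertex `Λ_{pq} = e_p + e_q` of the hypersimplex `Δ_{5,2} ⊂ ℝ⁵`. -/
noncomputable def Lam (p q : Fin 5) : EuclideanSpace ℝ (Fin 5) :=
  EuclideanSpace.single p 1 + EuclideanSpace.single q 1

lemma lam_apply (p q m : Fin 5) :
    Lam p q m = (if m = p then (1:ℝ) else 0) + (if m = q then 1 else 0) := by
  simp [Lam, EuclideanSpace.single_apply]

lemma lam_comm (p q : Fin 5) : Lam p q = Lam q p := by
  simp [Lam, add_comm]

lemma sum_lam (p q : Fin 5) (hpq : p ≠ q) : ∑ m, Lam p q m = 2 := by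
  simp [lam_apply, Finset.sum_add_distrib]
  norm_num

lemma lam_nonneg (p q m : Fin 5) : 0 ≤ Lam p q m := by
  rw [lam_apply]; split_ifs <;> norm_num

/-- The hypersimplex `Δ_{5,2}`: the convex hull of the ten points `Λ_{pq}`, `p ≠ q`. -/
noncomputable def hyperSimplex52 : Set (EuclideanSpace ℝ (Fin 5)) :=
  convexHull ℝ {x | ∃ p q : Fin 5, p ≠ q ∧ x = Lam p q}

/-- The seven-sided pyramid `P_{ij}` with apex `Λ_{ij}`: the convex hull of
`{Λ_{ij}} ∪ {Λ_{ik}, Λ_{jk} : k ∉ {i,j}}`. -/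
noncomputable def pyramidP (i j : Fin 5) : Set (EuclideanSpace ℝ (Fin 5)) :=
  convexHull ℝ {x | x = Lam i j ∨ ∃ k, k ≠ i ∧ k ≠ j ∧ (x = Lam i k ∨ x = Lam j k)}

/-- The polytope `K_{ij}` on the nine vertices `{Λ_{pq} : {p,q} ≠ {i,j}}`. -/
noncomputable def polytopeK (i j : Fin 5) : Set (EuclideanSpace ℝ (Fin 5)) :=
  convexHull ℝ
    {x | ∃ p q : Fin 5, p ≠ q ∧ ({p, q} : Set (Fin 5)) ≠ ({i, j} : Set (Fin 5)) ∧ x = Lam p q}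

lemma hyper_box : ∀ x ∈ hyperSimplex52, (∀ k, 0 ≤ x k) ∧ ∑ k, x k = 2 := by
  intro x hx
  have hS : Convex ℝ {x : EuclideanSpace ℝ (Fin 5) | (∀ k, 0 ≤ x k) ∧ ∑ k, x k = 2} := by
    intro x hx y hy a b ha hb hab
    have hcoord : ∀ k, (a • x + b • y) k = a * x k + b * y k := by
      intro k; simp
    constructor
    · intro k
      rw [hcoord k]
      exact add_nonneg (mul_nonneg ha (hx.1 k)) (mul_nonneg hb (hy.1 k))
    · simp_rw [hcoord, Finset.sum_add_distrib, ← Finset.mul_sum, hx.2, hy.2]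
      linarith
  refine convexHull_min ?_ hS hx
  rintro y ⟨p, q, hpq, rfl⟩
  exact ⟨lam_nonneg p q, sum_lam p q hpq⟩

lemma aux_nat : ∀ i j p q : Fin 5, i ≠ j → p ≠ q → ¬((p = i ∧ q = j) ∨ (p = j ∧ q = i)) →
    ((if i = p then 1 else 0) + (if i = q then 1 else 0) +
      ((if j = p then 1 else 0) + (if j = q then 1 else 0)) : ℕ) ≤ 1 := by decide

lemma f_linear (i j : Fin 5) :
    IsLinearMap ℝ (fun x : EuclideanSpace ℝ (Fin 5) => x i + x j) := by
  constructor
  · intro x y; simp; ring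
  · intro c x; simp; ring

lemma combo_f (i j : Fin 5) (a b : EuclideanSpace ℝ (Fin 5)) (u v : ℝ) :
    (u • a + v • b) i + (u • a + v • b) j = u * (a i + a j) + v * (b i + b j) := by
  simp; ring

lemma pyramid_f (i j : Fin 5) (hij : i ≠ j) : ∀ x ∈ pyramidP i j, 1 ≤ x i + x j := by
  intro x hx
  refine convexHull_min ?_ (convex_halfSpace_ge (f_linear i j) 1) hx
  rintro y (rfl | ⟨k, hki, hkj, rfl | rfl⟩)
  · simp [lam_apply, hij, hij.symm]
  · simp [lam_apply, hij.symm, Ne.symm hki, Ne.symm hkj]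
  · simp [lam_apply, hij, Ne.symm hki, Ne.symm hkj]

lemma polytopeK_f (i j : Fin 5) (hij : i ≠ j) : ∀ x ∈ polytopeK i j, x i + x j ≤ 1 := by
  intro x hx
  refine convexHull_min ?_ (convex_halfSpace_le (f_linear i j) 1) hx
  rintro y ⟨p, q, hpq, hne, rfl⟩
  have hnot : ¬((p = i ∧ q = j) ∨ (p = j ∧ q = i)) := by
    rintro (⟨rfl, rfl⟩ | ⟨rfl, rfl⟩)
    · exact hne rfl
    · exact hne (Set.pair_comm p q)
  have := aux_nat i j p q hij hpq hnot
  have h2 : ((if i = p then (1:ℝ) else 0) + (if i = q then 1 else 0) +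
      ((if j = p then 1 else 0) + (if j = q then 1 else 0))) ≤ 1 := by
    exact_mod_cast (by push_cast; exact_mod_cast this : _)
  simp only [Set.mem_setOf_eq, lam_apply]
  split_ifs at h2 ⊢ <;> linarith

lemma exists_kl : ∀ i j : Fin 5, ∃ k l : Fin 5, k ≠ l ∧ k ≠ i ∧ k ≠ j ∧ l ≠ i ∧ l ≠ j := by
  decide

/-- the "middle" octahedron lemma -/
lemma mem_middle (i j : Fin 5) (hij : i ≠ j) (x : EuclideanSpace ℝ (Fin 5))
    (hnn : ∀ k, 0 ≤ x k) (hsum : ∑ k, x k = 2) (hf : x i + x j = 1) :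
    x ∈ convexHull ℝ {y : EuclideanSpace ℝ (Fin 5) |
      ∃ k, k ≠ i ∧ k ≠ j ∧ (y = Lam i k ∨ y = Lam j k)} := by
  classical
  set s3 : Finset (Fin 5) := Finset.univ.filter (fun k => k ≠ i ∧ k ≠ j) with hs3
  have hrest : ∑ k ∈ s3, x k = 1 := by
    have hsplit := Finset.sum_filter_add_sum_filter_not Finset.univ
      (fun k => k ≠ i ∧ k ≠ j) (fun k => x k)
    have hco : Finset.univ.filter (fun k => ¬(k ≠ i ∧ k ≠ j)) = {i, j} := by
      ext k; simp [Finset.mem_insert]; tauto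
    rw [hco, Finset.sum_pair hij, hsum] at hsplit
    linarith [hsplit]
  set t : Finset (Bool × Fin 5) := Finset.univ ×ˢ s3 with ht
  set w : Bool × Fin 5 → ℝ := fun bk => (if bk.1 then x i else x j) * x bk.2 with hw
  set z : Bool × Fin 5 → EuclideanSpace ℝ (Fin 5) :=
    fun bk => if bk.1 then Lam i bk.2 else Lam j bk.2 with hz
  have hw0 : ∀ bk ∈ t, 0 ≤ w bk := by
    rintro ⟨b, k⟩ _
    refine mul_nonneg ?_ (hnn k)
    cases b <;> simp [hw, hnn i, hnn j]
  have hws : ∑ bk ∈ t, w bk = 1 := by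
    rw [ht, Finset.sum_product]
    rw [Fintype.sum_bool]
    simp only [hw]
    norm_num
    rw [← Finset.mul_sum, ← Finset.mul_sum, hrest]
    linarith
  have hzmem : ∀ bk ∈ t, z bk ∈ {y : EuclideanSpace ℝ (Fin 5) |
      ∃ k, k ≠ i ∧ k ≠ j ∧ (y = Lam i k ∨ y = Lam j k)} := by
    rintro ⟨b, k⟩ hbk
    have hk : k ∈ s3 := (Finset.mem_product.1 hbk).2
    rw [hs3, Finset.mem_filter] at hk
    cases b
    · exact ⟨k, hk.2.1, hk.2.2, Or.inr rfl⟩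
    · exact ⟨k, hk.2.1, hk.2.2, Or.inl rfl⟩
  have hcm := Finset.centerMass_mem_convexHull t hw0 (by rw [hws]; norm_num) hzmem
  have hcmx : t.centerMass w z = x := by
    rw [Finset.centerMass, hws, inv_one, one_smul]
    ext m
    rw [WithLp.ofLp_sum, Finset.sum_apply]
    have happ : ∀ bk : Bool × Fin 5, (w bk • z bk) m = w bk * z bk m := fun bk => rfl
    simp_rw [happ]
    rw [ht, Finset.sum_product, Fintype.sum_bool]
    show (∑ k ∈ s3, x i * x k * Lam i k m) + (∑ k ∈ s3, x j * x k * Lam j k m) = x m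
    by_cases hmi : m = i
    · have e1 : ∑ k ∈ s3, x i * x k * Lam i k m = x i := by
        have hc : ∀ k ∈ s3, x i * x k * Lam i k m = x i * x k := by
          intro k hk
          rw [hs3, Finset.mem_filter] at hk
          rw [lam_apply, if_pos hmi, if_neg (by rw [hmi]; exact Ne.symm hk.2.1)]
          ring
        rw [Finset.sum_congr rfl hc, ← Finset.mul_sum, hrest, mul_one]
      have e2 : ∑ k ∈ s3, x j * x k * Lam j k m = 0 := by
        have hc : ∀ k ∈ s3, x j * x k * Lam j k m = 0 := by
          intro k hk
          rw [hs3, Finset.mem_filter] at hk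
          rw [lam_apply, if_neg (by rw [hmi]; exact hij), if_neg (by rw [hmi]; exact Ne.symm hk.2.1)]
          ring
        rw [Finset.sum_congr rfl hc, Finset.sum_const, smul_zero]
      rw [e1, e2, hmi, add_zero]
    · by_cases hmj : m = j
      · have e1 : ∑ k ∈ s3, x i * x k * Lam i k m = 0 := by
          have hc : ∀ k ∈ s3, x i * x k * Lam i k m = 0 := by
            intro k hk
            rw [hs3, Finset.mem_filter] at hk
            rw [lam_apply, if_neg hmi, if_neg (by rw [hmj]; exact Ne.symm hk.2.2)]
            ring
          rw [Finset.sum_congr rfl hc, Finset.sum_const, smul_zero]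
        have e2 : ∑ k ∈ s3, x j * x k * Lam j k m = x j := by
          have hc : ∀ k ∈ s3, x j * x k * Lam j k m = x j * x k := by
            intro k hk
            rw [hs3, Finset.mem_filter] at hk
            rw [lam_apply, if_pos hmj, if_neg (by rw [hmj]; exact Ne.symm hk.2.2)]
            ring
          rw [Finset.sum_congr rfl hc, ← Finset.mul_sum, hrest, mul_one]
        rw [e1, e2, hmj, zero_add]
      · have hm3 : m ∈ s3 := by
          rw [hs3, Finset.mem_filter]; exact ⟨Finset.mem_univ m, hmi, hmj⟩
        have e1 : ∑ k ∈ s3, x i * x k * Lam i k m = x i * x m := by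
          have hc : ∀ k ∈ s3, x i * x k * Lam i k m = if m = k then x i * x k else 0 := by
            intro k _
            rw [lam_apply, if_neg hmi]
            by_cases h : m = k
            · rw [if_pos h, if_pos h]; ring
            · rw [if_neg h, if_neg h]; ring
          rw [Finset.sum_congr rfl hc, Finset.sum_ite_eq, if_pos hm3]
        have e2 : ∑ k ∈ s3, x j * x k * Lam j k m = x j * x m := by
          have hc : ∀ k ∈ s3, x j * x k * Lam j k m = if m = k then x j * x k else 0 := by
            intro k _
            rw [lam_apply, if_neg hmj]
            by_cases h : m = k
            · rw [if_pos h, if_pos h]; ring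
            · rw [if_neg h, if_neg h]; ring
          rw [Finset.sum_congr rfl hc, Finset.sum_ite_eq, if_pos hm3]
        rw [e1, e2]
        linear_combination x m * hf
  rw [← hcmx]; exact hcm

lemma vertexUnion (i j : Fin 5) (hij : i ≠ j) :
    {x : EuclideanSpace ℝ (Fin 5) | ∃ p q : Fin 5, p ≠ q ∧ x = Lam p q} =
    {x : EuclideanSpace ℝ (Fin 5) |
        x = Lam i j ∨ ∃ k, k ≠ i ∧ k ≠ j ∧ (x = Lam i k ∨ x = Lam j k)} ∪
    {x : EuclideanSpace ℝ (Fin 5) | ∃ p q : Fin 5, p ≠ q ∧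
        ({p, q} : Set (Fin 5)) ≠ ({i, j} : Set (Fin 5)) ∧ x = Lam p q} := by
  ext x
  constructor
  · rintro ⟨p, q, hpq, rfl⟩
    by_cases hset : ({p, q} : Set (Fin 5)) = ({i, j} : Set (Fin 5))
    · left
      have hp : p = i ∨ p = j := by
        have : p ∈ ({i, j} : Set (Fin 5)) := by rw [← hset]; simp
        simpa using this
      have hq : q = i ∨ q = j := by
        have : q ∈ ({i, j} : Set (Fin 5)) := by rw [← hset]; simp
        simpa using this
      rcases hp with rfl | rfl
      · rcases hq with rfl | rfl
        · exact absurd rfl hpq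
        · exact Or.inl rfl
      · rcases hq with rfl | rfl
        · exact Or.inl (lam_comm _ _)
        · exact absurd rfl hpq
    · right; exact ⟨p, q, hpq, hset, rfl⟩
  · rintro (h | ⟨p, q, hpq, _, rfl⟩)
    · rcases h with rfl | ⟨k, hki, hkj, rfl | rfl⟩
      · exact ⟨i, j, hij, rfl⟩
      · exact ⟨i, k, Ne.symm hki, rfl⟩
      · exact ⟨j, k, Ne.symm hkj, rfl⟩
    · exact ⟨p, q, hpq, rfl⟩

set_option maxHeartbeats 1000000 in
/-- For distinct `i, j ∈ {1,…,5}`, the pair `{K_{ij}, P_{ij}}` is a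
polyhedral decomposition of `Δ_{5,2}`: `P_{ij} ∪ K_{ij} = Δ_{5,2}` and the relative
(intrinsic) interiors of `P_{ij}` and `K_{ij}` are disjoint. -/
theorem statement14 (i j : Fin 5) (hij : i ≠ j) :
    pyramidP i j ∪ polytopeK i j = hyperSimplex52 ∧
    Disjoint (intrinsicInterior ℝ (pyramidP i j)) (intrinsicInterior ℝ (polytopeK i j)) := by
  classical
  obtain ⟨k₀, l₀, hkl₀, hki₀, hkj₀, hli₀, hlj₀⟩ := exists_kl i j
  have hklset : ({k₀, l₀} : Set (Fin 5)) ≠ ({i, j} : Set (Fin 5)) := by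
    intro h
    have : k₀ ∈ ({i, j} : Set (Fin 5)) := by rw [← h]; simp
    simp at this
    tauto
  -- subsets of the hypersimplex
  have hPΔ : pyramidP i j ⊆ hyperSimplex52 := by
    apply convexHull_mono
    rintro y (rfl | ⟨k, hki, hkj, rfl | rfl⟩)
    · exact ⟨i, j, hij, rfl⟩
    · exact ⟨i, k, Ne.symm hki, rfl⟩
    · exact ⟨j, k, Ne.symm hkj, rfl⟩
  have hKΔ : polytopeK i j ⊆ hyperSimplex52 := by
    apply convexHull_mono
    rintro y ⟨p, q, hpq, _, rfl⟩
    exact ⟨p, q, hpq, rfl⟩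
  -- middle set inclusions
  have hMP : convexHull ℝ {y : EuclideanSpace ℝ (Fin 5) |
      ∃ k, k ≠ i ∧ k ≠ j ∧ (y = Lam i k ∨ y = Lam j k)} ⊆ pyramidP i j :=
    convexHull_mono (fun y hy => Or.inr hy)
  have hMK : convexHull ℝ {y : EuclideanSpace ℝ (Fin 5) |
      ∃ k, k ≠ i ∧ k ≠ j ∧ (y = Lam i k ∨ y = Lam j k)} ⊆ polytopeK i j := by
    apply convexHull_mono
    rintro y ⟨k, hki, hkj, rfl | rfl⟩
    · refine ⟨i, k, Ne.symm hki, ?_, rfl⟩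
      intro h
      have : k ∈ ({i, j} : Set (Fin 5)) := by rw [← h]; simp
      simp at this; tauto
    · refine ⟨j, k, Ne.symm hkj, ?_, rfl⟩
      intro h
      have : k ∈ ({i, j} : Set (Fin 5)) := by rw [← h]; simp
      simp at this; tauto
  have key : ∀ y ∈ hyperSimplex52, y i + y j = 1 → y ∈ pyramidP i j ∩ polytopeK i j := by
    intro y hy hf1
    obtain ⟨hnn, hsum⟩ := hyper_box y hy
    have hm := mem_middle i j hij y hnn hsum hf1
    exact ⟨hMP hm, hMK hm⟩
  constructor
  · -- the union
    apply Set.Subset.antisymm (Set.union_subset hPΔ hKΔ)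
    have hPne : {x : EuclideanSpace ℝ (Fin 5) |
        x = Lam i j ∨ ∃ k, k ≠ i ∧ k ≠ j ∧ (x = Lam i k ∨ x = Lam j k)}.Nonempty :=
      ⟨Lam i j, Or.inl rfl⟩
    have hKne : {x : EuclideanSpace ℝ (Fin 5) | ∃ p q : Fin 5, p ≠ q ∧
        ({p, q} : Set (Fin 5)) ≠ ({i, j} : Set (Fin 5)) ∧ x = Lam p q}.Nonempty :=
      ⟨Lam k₀ l₀, k₀, l₀, hkl₀, hklset, rfl⟩
    have hjoin : hyperSimplex52 = convexJoin ℝ (pyramidP i j) (polytopeK i j) := by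
      rw [hyperSimplex52, vertexUnion i j hij, convexHull_union hPne hKne]
      rfl
    intro x hx
    rw [hjoin, mem_convexJoin] at hx
    obtain ⟨a, ha, b, hb, u, v, hu, hv, huv, hxeq⟩ := hx
    have haΔ := hPΔ ha
    have hbΔ := hKΔ hb
    have hα : 1 ≤ a i + a j := pyramid_f i j hij a ha
    have hβ : b i + b j ≤ 1 := polytopeK_f i j hij b hb
    have hxΔ : x ∈ hyperSimplex52 := by
      rw [← hxeq]; exact (convex_convexHull ℝ _) haΔ hbΔ hu hv huv
    have hfx : x i + x j = u * (a i + a j) + v * (b i + b j) := by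
      rw [← hxeq, combo_f]
    set α := a i + a j with hαd
    set β := b i + b j with hβd
    rcases lt_trichotomy (x i + x j) 1 with hlt | heq | hgt
    · -- x ∈ K
      right
      have hβ1 : β < 1 := by nlinarith [mul_nonneg hu (by linarith : (0:ℝ) ≤ α - β)]
      have hd : 0 < α - β := by linarith
      set u' : ℝ := (1 - β) / (α - β) with hu'd
      have h1 : u' * (α - β) = 1 - β := div_mul_cancel₀ _ (ne_of_gt hd)
      have hu'0 : 0 < u' := div_pos (by linarith) hd
      have hu'1 : u' ≤ 1 := by rw [hu'd, div_le_one hd]; linarith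
      set c := u' • a + (1 - u') • b with hcd
      have hcΔ : c ∈ hyperSimplex52 := by
        rw [hcd]
        exact (convex_convexHull ℝ _) haΔ hbΔ hu'0.le (by linarith) (by ring)
      have hcf : c i + c j = 1 := by
        rw [hcd, combo_f, ← hαd, ← hβd]; nlinarith [h1]
      have hcK : c ∈ polytopeK i j := (key c hcΔ hcf).2
      have huu' : u < u' := by
        have h2 : u * (α - β) < u' * (α - β) := by nlinarith
        exact lt_of_mul_lt_mul_right h2 hd.le
      have hxc : (u / u') • c + (1 - u / u') • b = x := by
        rw [hcd, ← hxeq]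
        match_scalars
        · field_simp
        · field_simp; linear_combination -u' * huv
      rw [← hxc]
      exact (convex_convexHull ℝ _) hcK hb (div_nonneg hu hu'0.le)
        (by rw [sub_nonneg, div_le_one hu'0]; linarith) (by ring)
    · exact Or.inl (key x hxΔ heq).1
    · -- x ∈ P
      left
      have hα1 : 1 < α := by nlinarith [mul_nonneg hv (by linarith : (0:ℝ) ≤ 1 - β)]
      have hd : 0 < α - β := by linarith
      set u' : ℝ := (1 - β) / (α - β) with hu'd
      have h1 : u' * (α - β) = 1 - β := div_mul_cancel₀ _ (ne_of_gt hd)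
      have hu'0 : 0 ≤ u' := div_nonneg (by linarith) hd.le
      have hu'1 : u' < 1 := by rw [hu'd, div_lt_one hd]; linarith
      have hv'0 : 0 < 1 - u' := by linarith
      set c := u' • a + (1 - u') • b with hcd
      have hcΔ : c ∈ hyperSimplex52 := by
        rw [hcd]
        exact (convex_convexHull ℝ _) haΔ hbΔ hu'0 (by linarith) (by ring)
      have hcf : c i + c j = 1 := by
        rw [hcd, combo_f, ← hαd, ← hβd]; nlinarith [h1]
      have hcP : c ∈ pyramidP i j := (key c hcΔ hcf).1
      have huu' : u' < u := by
        have h2 : u' * (α - β) < u * (α - β) := by nlinarith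
        exact lt_of_mul_lt_mul_right h2 hd.le
      have hvv' : v < 1 - u' := by linarith
      have hxc : (1 - v / (1 - u')) • a + (v / (1 - u')) • c = x := by
        rw [hcd, ← hxeq]
        match_scalars
        · field_simp; linear_combination (u' - 1) * huv
        · field_simp
      rw [← hxc]
      exact (convex_convexHull ℝ _) ha hcP
        (by rw [sub_nonneg, div_le_one hv'0]; linarith)
        (div_nonneg hv hv'0.le) (by ring)
  · -- disjointness
    rw [Set.disjoint_left]
    intro x hxP hxK
    have hxP' := intrinsicInterior_subset hxP
    have hxK' := intrinsicInterior_subset hxK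
    have h1 : 1 ≤ x i + x j := pyramid_f i j hij x hxP'
    have h2 : x i + x j ≤ 1 := polytopeK_f i j hij x hxK'
    have hfx : x i + x j = 1 := le_antisymm h2 h1
    have hklK : Lam k₀ l₀ ∈ polytopeK i j :=
      subset_convexHull ℝ _ ⟨k₀, l₀, hkl₀, hklset, rfl⟩
    rw [mem_intrinsicInterior] at hxK
    obtain ⟨y, hy, hyx⟩ := hxK
    have hxspan : x ∈ affineSpan ℝ (polytopeK i j) := by rw [← hyx]; exact y.2
    have hklspan : Lam k₀ l₀ ∈ affineSpan ℝ (polytopeK i j) := subset_affineSpan ℝ _ hklK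
    set φ : ℝ → affineSpan ℝ (polytopeK i j) := fun t =>
      ⟨AffineMap.lineMap (Lam k₀ l₀) x t, AffineMap.lineMap_mem t hklspan hxspan⟩ with hφ
    have hφcont : Continuous φ := by
      apply Continuous.subtype_mk
      exact AffineMap.lineMap_continuous
    have hopen : IsOpen (φ ⁻¹' interior ((↑) ⁻¹' polytopeK i j : Set (affineSpan ℝ (polytopeK i j)))) :=
      isOpen_interior.preimage hφcont
    have h1mem : (1 : ℝ) ∈ φ ⁻¹' interior ((↑) ⁻¹' polytopeK i j : Set (affineSpan ℝ (polytopeK i j))) := by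
      have hφ1 : φ 1 = y := by
        apply Subtype.ext
        simp [hφ, hyx]
      rw [Set.mem_preimage, hφ1]
      exact hy
    obtain ⟨ε, hε, hball⟩ := Metric.isOpen_iff.1 hopen 1 h1mem
    have htmem : (1 + ε / 2) ∈ Metric.ball (1 : ℝ) ε := by
      rw [Metric.mem_ball, Real.dist_eq, show (1 + ε / 2 - 1) = ε / 2 by ring,
        abs_of_pos (by linarith)]
      linarith
    have hmem2 := interior_subset (hball htmem)
    have hptK : (AffineMap.lineMap (Lam k₀ l₀) x (1 + ε / 2) : EuclideanSpace ℝ (Fin 5))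
        ∈ polytopeK i j := hmem2
    have hle := polytopeK_f i j hij _ hptK
    have hcoord : ∀ m, (AffineMap.lineMap (Lam k₀ l₀) x (1 + ε / 2) : EuclideanSpace ℝ (Fin 5)) m
        = (1 + ε / 2) * (x m - Lam k₀ l₀ m) + Lam k₀ l₀ m := by
      intro m; simp [AffineMap.lineMap_apply]
    have hΛi : Lam k₀ l₀ i = 0 := by
      rw [lam_apply, if_neg (Ne.symm hki₀), if_neg (Ne.symm hli₀)]; norm_num
    have hΛj : Lam k₀ l₀ j = 0 := by
      rw [lam_apply, if_neg (Ne.symm hkj₀), if_neg (Ne.symm hlj₀)]; norm_num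
    rw [hcoord i, hcoord j, hΛi, hΛj] at hle
    have h3 : (1 + ε / 2) * (x i + x j) = 1 + ε / 2 := by rw [hfx]; ring
    nlinarith [hle, h3, hε]
end
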